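/- Let A=(a_1,...,a_n) and B=(b_1,...,b_n) be sequences of nonnegative integers in good order with a_i ≤ b_i for all i. If the pair (A;B) is realizable by a simple graph, then for every t with 0 ≤ t ≤ n, ∑_{i=1}^t a_i ≤ ∑_{i=1}^t b̄_i, where (b̄_1,...,b̄_n) is the Berge sequence of B. -/

import Mathlib

open Finset
open Classical

/-- The pair `(A;B)` is realizable by a simple graph: there is a simple graph `G`
on vertices `v_1, …, v_n` with `a i ≤ deg(v_i) ≤ b i` for `1 ≤ i ≤ n`.
(Sequences are 1-indexed; vertex `i : Fin n` corresponds to index `i+1`.) -/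
def Realizable (n : ℕ) (a b : ℕ → ℕ) : Prop :=
  ∃ (G : SimpleGraph (Fin n)) (_ : DecidableRel G.Adj),
    ∀ i : Fin n, a (i.1 + 1) ≤ G.degree i ∧ G.degree i ≤ b (i.1 + 1)

/-- `A` and `B` are in good order: `(a_{i+1}, b_{i+1}) ⪯ (a_i, b_i)` lexicographically. -/
def GoodOrder (n : ℕ) (a b : ℕ → ℕ) : Prop :=
  ∀ i, 1 ≤ i → i + 1 ≤ n →
    a (i + 1) < a i ∨ (a (i + 1) = a i ∧ b (i + 1) ≤ b i)

/-- The set `I_t = {i : t+1 ≤ i ≤ n, b i ≥ t+1}`. -/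
def Iset (n : ℕ) (b : ℕ → ℕ) (t : ℕ) : Finset ℕ :=
  (Finset.Icc (t + 1) n).filter fun i => t + 1 ≤ b i

/-- The parity correction `ε(t)` of Cai–Deng–Zang. -/
noncomputable def eps (n : ℕ) (a b : ℕ → ℕ) (t : ℕ) : ℤ :=
  if (∀ i ∈ Iset n b t, a i = b i) ∧
      Odd (∑ i ∈ Iset n b t, b i + t * (Iset n b t).card)
  then 1 else 0

/-- `berge n b i` is the `i`-th column sum of the `n × n` 0-1 matrix in which row `k`
has its `b k` leading entries equal to `1`, skipping the diagonal entry `(k,k)`. -/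
def berge (n : ℕ) (b : ℕ → ℕ) (i : ℕ) : ℕ :=
  ((Finset.Icc 1 n).filter fun k => k ≠ i ∧ (i ≤ b k ∨ (i = b k + 1 ∧ k ≤ b k))).card

/-- The conjugate sequence: `conj n b i = |{k : 1 ≤ k ≤ n, b k ≥ i}|`. -/
def conj (n : ℕ) (b : ℕ → ℕ) (i : ℕ) : ℕ :=
  ((Finset.Icc 1 n).filter fun k => i ≤ b k).card

/-- `g = max{i : c_i ≥ i}` (0 if there is no such index). -/
def gIdx (n : ℕ) (c : ℕ → ℕ) : ℕ :=
  ((Finset.Icc 1 n).filter fun i => i ≤ c i).sup id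

/-- The Ryser modification: `c̃_i = c_i + 1` for `i ≤ g`, and `c̃_i = c_i` otherwise. -/
def tilde (n : ℕ) (c : ℕ → ℕ) (i : ℕ) : ℕ :=
  if i ≤ gIdx n c then c i + 1 else c i

/-- `s = max{i : a_i ≥ i - 1}` (0 if there is no such index). -/
def sIdx (n : ℕ) (a : ℕ → ℕ) : ℕ :=
  ((Finset.Icc 1 n).filter fun i => i ≤ a i + 1).sup id

/-- The interval pair `(S;S)` is bipartite-interval realizable: there is a bipartite
graph `F` with parts `{x_1,…,x_n}`, `{y_1,…,y_n}` (modelled on `Fin n ⊕ Fin n`, all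
edges going between the parts) with `lo i ≤ deg(x_i) ≤ hi i` and `lo i ≤ deg(y_i) ≤ hi i`. -/
def BipIntervalRealizable (n : ℕ) (lo hi : ℕ → ℕ) : Prop :=
  ∃ (F : SimpleGraph (Fin n ⊕ Fin n)) (_ : DecidableRel F.Adj),
    (∀ u v, F.Adj u v → u.isLeft ≠ v.isLeft) ∧
    (∀ i : Fin n, lo (i.1 + 1) ≤ F.degree (Sum.inl i) ∧ F.degree (Sum.inl i) ≤ hi (i.1 + 1)) ∧
    (∀ i : Fin n, lo (i.1 + 1) ≤ F.degree (Sum.inr i) ∧ F.degree (Sum.inr i) ≤ hi (i.1 + 1))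

/-- Theorem 2.1: if `(A;B)` (in good order, with `a_i ≤ b_i`) is realizable by a graph,
then `∑_{i=1}^t a_i ≤ ∑_{i=1}^t b̄_i` for every `0 ≤ t ≤ n`, where `b̄` is the Berge
sequence of `B`. -/
lemma sum_filter_Icc_fin (n : ℕ) (p : ℕ → Prop) [DecidablePred p] (f : ℕ → ℕ) :
    ∑ i ∈ Finset.univ.filter (fun i : Fin n => p (i.1 + 1)), f (i.1 + 1)
      = ∑ i ∈ (Finset.Icc 1 n).filter p, f i := by
  apply Finset.sum_nbij (i := fun i : Fin n => i.1 + 1)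
  · intro i hi
    simp only [Finset.mem_filter, Finset.mem_univ, true_and] at hi ⊢
    simp only [Finset.mem_Icc]
    exact ⟨⟨Nat.le_add_left 1 i.1, by omega⟩, hi⟩
  · intro i _ j _ h
    simp only at h
    exact Fin.ext (by omega)
  · intro k hk
    simp only [Finset.coe_filter, Finset.mem_Icc, Set.mem_setOf_eq, Finset.mem_coe] at hk ⊢
    obtain ⟨⟨h1, h2⟩, hp⟩ := hk
    refine ⟨⟨k - 1, by omega⟩, ?_, by simp; omega⟩
    simp only [Finset.mem_univ, true_and, Set.mem_setOf_eq]
    have : k - 1 + 1 = k := by omega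
    rw [this]; exact hp
  · intro i _; rfl

lemma berge_sum_eq (n t : ℕ) (b : ℕ → ℕ) (ht : t ≤ n) :
    ∑ i ∈ Finset.Icc 1 t, berge n b i
      = ∑ k ∈ Finset.Icc 1 t, min (b k) (t - 1)
        + ∑ k ∈ Finset.Icc (t + 1) n, min (b k) t := by
  classical
  have hsplit : Finset.Icc 1 n = Finset.Icc 1 t ∪ Finset.Icc (t + 1) n := by
    ext k; simp only [Finset.mem_Icc, Finset.mem_union]; omega
  have hdisj : Disjoint (Finset.Icc 1 t) (Finset.Icc (t + 1) n) := by
    rw [Finset.disjoint_left]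
    intro k hk hk'
    simp only [Finset.mem_Icc] at hk hk'; omega
  have hswap : ∑ i ∈ Finset.Icc 1 t, berge n b i
      = ∑ k ∈ Finset.Icc 1 n,
          ((Finset.Icc 1 t).filter
            fun i => k ≠ i ∧ (i ≤ b k ∨ (i = b k + 1 ∧ k ≤ b k))).card := by
    unfold berge
    simp_rw [Finset.card_filter]
    rw [Finset.sum_comm]
  rw [hswap, hsplit, Finset.sum_union hdisj]
  congr 1
  · apply Finset.sum_congr rfl
    intro k hk
    simp only [Finset.mem_Icc] at hk
    rcases le_or_gt k (b k) with hkb | hkb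
    · have hmem : k ∈ Finset.Icc 1 (min (b k + 1) t) := by
        simp only [Finset.mem_Icc]; omega
      have hset : (Finset.Icc 1 t).filter
            (fun i => k ≠ i ∧ (i ≤ b k ∨ (i = b k + 1 ∧ k ≤ b k)))
          = (Finset.Icc 1 (min (b k + 1) t)).erase k := by
        ext i
        simp only [Finset.mem_filter, Finset.mem_Icc, Finset.mem_erase]
        omega
      rw [hset, Finset.card_erase_of_mem hmem, Nat.card_Icc]
      omega
    · have hset : (Finset.Icc 1 t).filter
            (fun i => k ≠ i ∧ (i ≤ b k ∨ (i = b k + 1 ∧ k ≤ b k)))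
          = Finset.Icc 1 (b k) := by
        ext i
        simp only [Finset.mem_filter, Finset.mem_Icc]
        omega
      rw [hset, Nat.card_Icc]
      omega
  · apply Finset.sum_congr rfl
    intro k hk
    simp only [Finset.mem_Icc] at hk
    have hset : (Finset.Icc 1 t).filter
          (fun i => k ≠ i ∧ (i ≤ b k ∨ (i = b k + 1 ∧ k ≤ b k)))
        = Finset.Icc 1 (min (b k) t) := by
      ext i
      simp only [Finset.mem_filter, Finset.mem_Icc]
      omega
    rw [hset, Nat.card_Icc]
    omega

/-- Theorem 2.1: if `(A;B)` (in good order, with `a_i ≤ b_i`) is realizable by a graph,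
then `∑_{i=1}^t a_i ≤ ∑_{i=1}^t b̄_i` for every `0 ≤ t ≤ n`, where `b̄` is the Berge
sequence of `B`. -/
theorem realizable_imp_berge_ineq (n : ℕ) (a b : ℕ → ℕ)
    (hgood : GoodOrder n a b) (hab : ∀ i, 1 ≤ i → i ≤ n → a i ≤ b i)
    (hreal : Realizable n a b) :
    ∀ t, t ≤ n → ∑ i ∈ Finset.Icc 1 t, a i ≤ ∑ i ∈ Finset.Icc 1 t, berge n b i := by
  classical
  obtain ⟨G, _, hdeg⟩ := hreal
  intro t ht
  set T : Finset (Fin n) := Finset.univ.filter (fun i : Fin n => i.1 + 1 ≤ t) with hTdef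
  set Tc : Finset (Fin n) := Finset.univ.filter (fun i : Fin n => ¬ i.1 + 1 ≤ t) with hTcdef
  have hTcard : T.card = t := by
    have := sum_filter_Icc_fin n (fun i => i ≤ t) (fun _ => 1)
    simp only [Finset.sum_const, smul_eq_mul, mul_one] at this
    have hIcc : (Finset.Icc 1 n).filter (fun i => i ≤ t) = Finset.Icc 1 t := by
      ext i; simp only [Finset.mem_filter, Finset.mem_Icc]; omega
    rw [hIcc] at this
    rw [hTdef]
    simpa [Nat.card_Icc] using this
  -- step 1 : sum of a over Icc equals sum over T
  have h1 : ∑ i ∈ Finset.Icc 1 t, a i = ∑ i ∈ T, a (i.1 + 1) := by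
    have := sum_filter_Icc_fin n (fun i => i ≤ t) a
    have hIcc : (Finset.Icc 1 n).filter (fun i => i ≤ t) = Finset.Icc 1 t := by
      ext i; simp only [Finset.mem_filter, Finset.mem_Icc]; omega
    rw [hIcc] at this
    exact this.symm
  -- degree decomposition
  have hdecomp : ∀ i : Fin n, G.degree i
      = (T.filter (fun k => G.Adj i k)).card + (Tc.filter (fun k => G.Adj i k)).card := by
    intro i
    rw [SimpleGraph.degree, SimpleGraph.neighborFinset_eq_filter]
    have hu : (Finset.univ : Finset (Fin n)) = T ∪ Tc := by
      ext k; simp [hTdef, hTcdef]; omega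
    rw [hu, Finset.filter_union, Finset.card_union_of_disjoint]
    apply Finset.disjoint_filter_filter
    rw [Finset.disjoint_left]
    intro k hk hk'
    simp only [hTdef, hTcdef, Finset.mem_filter, Finset.mem_univ, true_and] at hk hk'
    exact hk' hk
  -- double counting
  have hdouble : ∑ i ∈ T, (Tc.filter (fun k => G.Adj i k)).card
      = ∑ k ∈ Tc, (T.filter (fun i => G.Adj k i)).card := by
    simp_rw [Finset.card_filter]
    rw [Finset.sum_comm]
    apply Finset.sum_congr rfl
    intro k _
    apply Finset.sum_congr rfl
    intro i _
    simp [SimpleGraph.adj_comm]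
  -- bounds within T
  have hboundT : ∀ i ∈ T, (T.filter (fun k => G.Adj i k)).card ≤ min (b (i.1 + 1)) (t - 1) := by
    intro i hi
    refine le_min ?_ ?_
    · calc (T.filter (fun k => G.Adj i k)).card
          ≤ (Finset.univ.filter (fun k => G.Adj i k)).card :=
            Finset.card_le_card (Finset.filter_subset_filter _ (Finset.subset_univ T))
        _ = G.degree i := by
            rw [SimpleGraph.degree, SimpleGraph.neighborFinset_eq_filter]
        _ ≤ b (i.1 + 1) := (hdeg i).2
    · have hsub : T.filter (fun k => G.Adj i k) ⊆ T.erase i := by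
        intro k hk
        simp only [Finset.mem_filter] at hk
        refine Finset.mem_erase.2 ⟨?_, hk.1⟩
        intro h
        exact G.irrefl (h ▸ hk.2)
      calc (T.filter (fun k => G.Adj i k)).card ≤ (T.erase i).card :=
            Finset.card_le_card hsub
        _ = t - 1 := by rw [Finset.card_erase_of_mem hi, hTcard]
  have hboundTc : ∀ k ∈ Tc, (T.filter (fun i => G.Adj k i)).card ≤ min (b (k.1 + 1)) t := by
    intro k _
    refine le_min ?_ ?_
    · calc (T.filter (fun i => G.Adj k i)).card
          ≤ (Finset.univ.filter (fun i => G.Adj k i)).card :=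
            Finset.card_le_card (Finset.filter_subset_filter _ (Finset.subset_univ T))
        _ = G.degree k := by
            rw [SimpleGraph.degree, SimpleGraph.neighborFinset_eq_filter]
        _ ≤ b (k.1 + 1) := (hdeg k).2
    · calc (T.filter (fun i => G.Adj k i)).card ≤ T.card :=
            Finset.card_le_card (Finset.filter_subset _ _)
        _ = t := hTcard
  -- reindex the min sums
  have h2 : ∑ i ∈ T, min (b (i.1 + 1)) (t - 1)
      = ∑ k ∈ Finset.Icc 1 t, min (b k) (t - 1) := by
    have := sum_filter_Icc_fin n (fun i => i ≤ t) (fun k => min (b k) (t - 1))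
    have hIcc : (Finset.Icc 1 n).filter (fun i => i ≤ t) = Finset.Icc 1 t := by
      ext i; simp only [Finset.mem_filter, Finset.mem_Icc]; omega
    rw [hIcc] at this
    exact this
  have h3 : ∑ k ∈ Tc, min (b (k.1 + 1)) t
      = ∑ k ∈ Finset.Icc (t + 1) n, min (b k) t := by
    have := sum_filter_Icc_fin n (fun i => ¬ i ≤ t) (fun k => min (b k) t)
    have hIcc : (Finset.Icc 1 n).filter (fun i => ¬ i ≤ t) = Finset.Icc (t + 1) n := by
      ext i; simp only [Finset.mem_filter, Finset.mem_Icc]; omega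
    rw [hIcc] at this
    rw [← this]
  calc ∑ i ∈ Finset.Icc 1 t, a i
      = ∑ i ∈ T, a (i.1 + 1) := h1
    _ ≤ ∑ i ∈ T, G.degree i := Finset.sum_le_sum (fun i _ => (hdeg i).1)
    _ = ∑ i ∈ T, (T.filter (fun k => G.Adj i k)).card
        + ∑ i ∈ T, (Tc.filter (fun k => G.Adj i k)).card := by
        rw [← Finset.sum_add_distrib]
        exact Finset.sum_congr rfl (fun i _ => hdecomp i)
    _ = ∑ i ∈ T, (T.filter (fun k => G.Adj i k)).card
        + ∑ k ∈ Tc, (T.filter (fun i => G.Adj k i)).card := by rw [hdouble]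
    _ ≤ ∑ i ∈ T, min (b (i.1 + 1)) (t - 1) + ∑ k ∈ Tc, min (b (k.1 + 1)) t :=
        Nat.add_le_add (Finset.sum_le_sum hboundT) (Finset.sum_le_sum hboundTc)
    _ = ∑ k ∈ Finset.Icc 1 t, min (b k) (t - 1)
        + ∑ k ∈ Finset.Icc (t + 1) n, min (b k) t := by rw [h2, h3]
    _ = ∑ i ∈ Finset.Icc 1 t, berge n b i := (berge_sum_eq n t b ht).symm
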